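/- Let T be a rigid object in C. Then ^⊥(T^⊥) = add T = (^⊥T)^⊥, where for a full subcategory X, X^⊥ = {Y ∈ C : Hom_C(X', ΣY) = 0 for all X' ∈ X} and ^⊥X = {Y ∈ C : Hom_C(Y, ΣX') = 0 for all X' ∈ X}. -/

import Mathlib

/-!
Common setup: `C` is a Hom-finite, Krull-Schmidt (= idempotent complete, given
Hom-finiteness over a field), `k`-linear triangulated category with suspension
functor `Σ = shiftFunctor C (1 : ℤ)`, and `T` is a rigid object of `C`.
-/

noncomputable section

open CategoryTheory CategoryTheory.Limits CategoryTheory.Pretriangulated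

universe v u

namespace PaperBM

instance moduleEndLeftOp {C : Type u} [Category.{v} C] [Preadditive C] {X Y : C} : Module (End (Opposite.op X)) (X ⟶ Y) where
  smul r f := r.unop ≫ f
  one_smul _ := Category.id_comp _
  mul_smul _ _ _ := Category.assoc _ _ _
  smul_add _ _ _ := Preadditive.comp_add _ _ _ _ _ _
  smul_zero _ := Limits.comp_zero
  add_smul _ _ _ := Preadditive.add_comp _ _ _ _ _ _
  zero_smul _ := Limits.zero_comp

variable {C : Type u} [Category.{v} C] [Preadditive C] [HasZeroObject C]
  [HasShift C ℤ] [∀ n : ℤ, (shiftFunctor C n).Additive] [Pretriangulated C]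
  [HasFiniteBiproducts C]

/-- `X` lies in `add T`: it is a direct summand of a finite direct sum of copies of `T`. -/
def memAdd (T X : C) : Prop :=
  ∃ (n : ℕ) (s : X ⟶ ⨁ (fun _ : Fin n => T)) (r : (⨁ fun _ : Fin n => T) ⟶ X), s ≫ r = 𝟙 X

/-- `T` is rigid: `Hom_C(T, ΣT) = 0`. -/
def IsRigidObj (T : C) : Prop := ∀ f : T ⟶ (shiftFunctor C (1 : ℤ)).obj T, f = 0

/-- `Y ∈ T^⊥`, i.e. `Hom_C(X, ΣY) = 0` for all `X ∈ add T`. -/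
def memTperp (T Y : C) : Prop :=
  ∀ (X : C), memAdd T X → ∀ f : X ⟶ (shiftFunctor C (1 : ℤ)).obj Y, f = 0

/-- `Y ∈ ⊥T`, i.e. `Hom_C(Y, ΣX) = 0` for all `X ∈ add T`. -/
def memPerpT (T Y : C) : Prop :=
  ∀ (X : C), memAdd T X → ∀ f : Y ⟶ (shiftFunctor C (1 : ℤ)).obj X, f = 0

/-- `Y ∈ ΣT^⊥`, the image of `T^⊥` under the suspension `Σ`. -/
def memSigmaTperp (T Y : C) : Prop :=
  ∃ Z : C, memTperp T Z ∧ Nonempty (Y ≅ (shiftFunctor C (1 : ℤ)).obj Z)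

/-- The map `f` factors through an object belonging to the class `P` of objects. -/
def FactorsThru (P : C → Prop) {A B : C} (f : A ⟶ B) : Prop :=
  ∃ (Z : C) (g : A ⟶ Z) (h : Z ⟶ B), P Z ∧ g ≫ h = f

/-- The class `S̃` of maps `f : X ⟶ Y` such that in a completion
`Σ⁻¹Z →h X →f Y →g Z` of `f` to a triangle (where `A` plays the role of `Σ⁻¹Z`,
so that `Z = ΣA`), both `g` and `h` factor through an object of `ΣT^⊥`. -/
def Stilde (T : C) : MorphismProperty C := fun X Y f =>
  ∃ (A : C) (h : A ⟶ X) (g : Y ⟶ (shiftFunctor C (1 : ℤ)).obj A),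
    (Triangle.mk h f g ∈ distTriang C) ∧
    FactorsThru (memSigmaTperp T) g ∧ FactorsThru (memSigmaTperp T) h

/-- The class `S` of maps `f : X ⟶ Y` such that in a completion
`Σ⁻¹Z →h X →f Y →g Z` of `f` to a triangle (where `A` plays the role of `Σ⁻¹Z`,
so that `Z = ΣA`), `g` factors through an object of `ΣT^⊥` and `Σ⁻¹Z ∈ ΣT^⊥`. -/
def Sclass (T : C) : MorphismProperty C := fun X Y f =>
  ∃ (A : C) (h : A ⟶ X) (g : Y ⟶ (shiftFunctor C (1 : ℤ)).obj A),
    (Triangle.mk h f g ∈ distTriang C) ∧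
    FactorsThru (memSigmaTperp T) g ∧ memSigmaTperp T A

/-- `X ∈ C(T)`: there is a triangle `T₁ → T₀ → X → ΣT₁` with `T₀, T₁ ∈ add T`. -/
def memCT (T X : C) : Prop :=
  ∃ (T₁ T₀ : C) (a : T₁ ⟶ T₀) (b : T₀ ⟶ X) (c : X ⟶ (shiftFunctor C (1 : ℤ)).obj T₁),
    memAdd T T₁ ∧ memAdd T T₀ ∧ (Triangle.mk a b c ∈ distTriang C)

/-- `f : X₀ ⟶ Y` is a right `P`-approximation of `Y`. -/
def IsRightApprox (P : C → Prop) {X₀ Y : C} (f : X₀ ⟶ Y) : Prop :=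
  P X₀ ∧ ∀ (W : C), P W → ∀ g : W ⟶ Y, ∃ g' : W ⟶ X₀, g' ≫ f = g

/-- `f : Y ⟶ X₀` is a left `P`-approximation of `Y`. -/
def IsLeftApprox (P : C → Prop) {Y X₀ : C} (f : Y ⟶ X₀) : Prop :=
  P X₀ ∧ ∀ (W : C), P W → ∀ g : Y ⟶ W, ∃ g' : X₀ ⟶ W, f ≫ g' = g

/-- The map `f : X₀ ⟶ Y` is right minimal. -/
def IsRightMinimal {X₀ Y : C} (f : X₀ ⟶ Y) : Prop :=
  ∀ g : X₀ ⟶ X₀, g ≫ f = f → IsIso g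

/-- The functor `H = Hom_C(T, -) : C ⥤ Mod End_C(T)ᵒᵖ`.  Here, with Mathlib's
conventions, the endomorphism ring `End (Opposite.op T)` of `T` viewed in `Cᵒᵖ` plays
the role of `End_C(T)ᵒᵖ`, so that each `Hom_C(T, X)` is a left module over it. -/
abbrev homFunctor (T : C) : C ⥤ ModuleCat.{v} (End (Opposite.op T)) where
  obj Y := ModuleCat.of _ (T ⟶ Y)
  map f := ModuleCat.ofHom
    { toFun := fun g => g ≫ f
      map_add' := fun _ _ => Preadditive.add_comp _ _ _ _ _ _
      map_smul' := fun _ _ => Category.assoc _ _ _ }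

/-- The predicate on `End_C(T)ᵒᵖ`-modules of being finite-dimensional (equivalently,
since `End_C(T)` is a finite-dimensional algebra, finitely generated). -/
abbrev isFinDim (T : C) : ModuleCat.{v} (End (Opposite.op T)) → Prop :=
  fun M => Module.Finite (End (Opposite.op T)) M

/-- The category `mod End_C(T)ᵒᵖ` of finite-dimensional `End_C(T)ᵒᵖ`-modules. -/
abbrev fdMod (T : C) := ObjectProperty.FullSubcategory (isFinDim T)

/-- The ideal relation on `C(T)` of maps factoring through an object of `ΣT^⊥`. -/
def homRelCT (T : C) : HomRel (ObjectProperty.FullSubcategory (memCT T)) :=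
  fun A B f g => FactorsThru (memSigmaTperp T) ((f.hom - g.hom : A.obj ⟶ B.obj))

/-- The ideal relation on `C(T)` of maps factoring through an object of `add ΣT`. -/
def homRelCTadd (T : C) : HomRel (ObjectProperty.FullSubcategory (memCT T)) :=
  fun A B f g => FactorsThru (memAdd ((shiftFunctor C (1 : ℤ)).obj T)) ((f.hom - g.hom : A.obj ⟶ B.obj))

/-- The ideal relation on `C` of maps factoring through an object of `add ΣT`. -/
def homRelAdd (T : C) : HomRel C :=
  fun A B f g => FactorsThru (memAdd ((shiftFunctor C (1 : ℤ)).obj T)) (f - g)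

end PaperBM

open PaperBM

namespace PaperBM

section Aux

variable {C : Type u} [Category.{v} C] [Preadditive C] [HasZeroObject C]
  [HasShift C ℤ] [∀ n : ℤ, (shiftFunctor C n).Additive] [Pretriangulated C]
  [HasFiniteBiproducts C]

/-- Any map into the shift of a finite biproduct of copies of `T` is zero,
provided maps into `ΣT` are zero. -/
lemma toShiftBiprod_zero {T A : C} (hA : ∀ u : A ⟶ (shiftFunctor C (1 : ℤ)).obj T, u = 0)
    {n : ℕ} (m : A ⟶ (shiftFunctor C (1 : ℤ)).obj (⨁ fun _ : Fin n => T)) : m = 0 := by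
  have htot : (𝟙 (⨁ fun _ : Fin n => T)) =
      ∑ j : Fin n, biproduct.π (fun _ : Fin n => T) j ≫ biproduct.ι (fun _ : Fin n => T) j :=
    (biproduct.total).symm
  calc m = m ≫ (shiftFunctor C (1 : ℤ)).map (𝟙 _) := by
          rw [CategoryTheory.Functor.map_id, Category.comp_id]
    _ = ∑ j : Fin n, m ≫ ((shiftFunctor C (1 : ℤ)).map (biproduct.π (fun _ : Fin n => T) j) ≫
          (shiftFunctor C (1 : ℤ)).map (biproduct.ι (fun _ : Fin n => T) j)) := by
          rw [htot, Functor.map_sum, Preadditive.comp_sum]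
          simp [Functor.map_comp]
    _ = 0 := Finset.sum_eq_zero (fun j _ => by
          rw [← Category.assoc, hA (m ≫ (shiftFunctor C (1 : ℤ)).map
            (biproduct.π (fun _ : Fin n => T) j)), zero_comp])

/-- Any map out of a finite biproduct of copies of `T` is zero, when all maps `T ⟶ Z` vanish. -/
lemma fromBiprod_zero {T Z : C} (h : ∀ u : T ⟶ Z, u = 0)
    {n : ℕ} (m : (⨁ fun _ : Fin n => T) ⟶ Z) : m = 0 := by
  apply biproduct.hom_ext'
  intro j
  rw [h (biproduct.ι (fun _ : Fin n => T) j ≫ m), comp_zero]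

lemma memPerpT_of_forall {T A : C} (hA : ∀ u : A ⟶ (shiftFunctor C (1 : ℤ)).obj T, u = 0) :
    memPerpT T A := by
  rintro X ⟨n, s, r, hsr⟩ f
  have : f = (f ≫ (shiftFunctor C (1 : ℤ)).map s) ≫ (shiftFunctor C (1 : ℤ)).map r := by
    rw [Category.assoc, ← Functor.map_comp, hsr, CategoryTheory.Functor.map_id, Category.comp_id]
  rw [this, toShiftBiprod_zero hA (f ≫ (shiftFunctor C (1 : ℤ)).map s), zero_comp]

lemma memTperp_of_forall {T A : C} (hA : ∀ u : T ⟶ (shiftFunctor C (1 : ℤ)).obj A, u = 0) :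
    memTperp T A := by
  rintro X ⟨n, s, r, hsr⟩ f
  have : f = s ≫ (r ≫ f) := by rw [← Category.assoc, hsr, Category.id_comp]
  rw [this, fromBiprod_zero hA (r ≫ f), comp_zero]

/-- Existence of a right `add T` approximation (for maps from `T`). -/
lemma exists_right_approx (k : Type*) [Field k] [CategoryTheory.Linear k C]
    [∀ X Y : C, FiniteDimensional k (X ⟶ Y)] (T Y : C) :
    ∃ (n : ℕ) (p : (⨁ fun _ : Fin n => T) ⟶ Y), ∀ q : T ⟶ Y, ∃ q', q' ≫ p = q := by
  set n := Module.finrank k (T ⟶ Y) with hn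
  let b : Module.Basis (Fin n) k (T ⟶ Y) := Module.finBasis k (T ⟶ Y)
  refine ⟨n, biproduct.desc (fun i => b i), fun q => ?_⟩
  refine ⟨∑ i : Fin n, (b.repr q i) • biproduct.ι (fun _ : Fin n => T) i, ?_⟩
  rw [Preadditive.sum_comp]
  simp only [Linear.smul_comp, biproduct.ι_desc]
  exact b.sum_repr q

/-- Existence of a left `add T` approximation (for maps to `T`). -/
lemma exists_left_approx (k : Type*) [Field k] [CategoryTheory.Linear k C]
    [∀ X Y : C, FiniteDimensional k (X ⟶ Y)] (T Y : C) :
    ∃ (n : ℕ) (p : Y ⟶ ⨁ fun _ : Fin n => T), ∀ q : Y ⟶ T, ∃ q', p ≫ q' = q := by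
  set n := Module.finrank k (Y ⟶ T) with hn
  let b : Module.Basis (Fin n) k (Y ⟶ T) := Module.finBasis k (Y ⟶ T)
  refine ⟨n, biproduct.lift (fun i => b i), fun q => ?_⟩
  refine ⟨∑ i : Fin n, (b.repr q i) • biproduct.π (fun _ : Fin n => T) i, ?_⟩
  rw [Preadditive.comp_sum]
  simp only [Linear.comp_smul, biproduct.lift_π]
  exact b.sum_repr q

end Aux

end PaperBM


/-- For a rigid object `T`, we have `^⊥(T^⊥) = add T = (^⊥T)^⊥`. -/
theorem statement_3 {C : Type u} [Category.{v} C] [Preadditive C] [HasZeroObject C]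
    [HasShift C ℤ] [∀ n : ℤ, (shiftFunctor C n).Additive] [Pretriangulated C]
    [HasFiniteBiproducts C]
    {k : Type*} [Field k] [CategoryTheory.Linear k C]
    [∀ X Y : C, FiniteDimensional k (X ⟶ Y)] [IsIdempotentComplete C]
    (T : C) (hT : IsRigidObj T) :
    (∀ Y : C,
      (∀ Z : C, memTperp T Z → ∀ u : Y ⟶ (shiftFunctor C (1 : ℤ)).obj Z, u = 0) ↔
        memAdd T Y) ∧
    (∀ Y : C,
      memAdd T Y ↔
        (∀ Z : C, memPerpT T Z → ∀ u : Z ⟶ (shiftFunctor C (1 : ℤ)).obj Y, u = 0)) := by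
  constructor
  · intro Y
    constructor
    · intro H
      -- take a right add T approximation and complete to a triangle
      obtain ⟨n, p, hp⟩ := exists_right_approx k T Y
      obtain ⟨A, h, g, mem⟩ := distinguished_cocone_triangle₁ p
      -- A ∈ T^⊥
      have hA : memTperp T A := by
        apply memTperp_of_forall
        intro u
        have hu : u ≫ ((Triangle.mk h p g).rotate).mor₃ = 0 := by
          dsimp [Triangle.rotate]
          change u ≫ (-(shiftFunctor C (1 : ℤ)).map h) = 0
          rw [Preadditive.comp_neg, neg_eq_zero, toShiftBiprod_zero hT
            (u ≫ (shiftFunctor C (1 : ℤ)).map h)]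
        obtain ⟨v, hv⟩ := Triangle.coyoneda_exact₃ _ (rot_of_distTriang _ mem) u hu
        obtain ⟨w, hw⟩ := hp v
        have hz := comp_distTriang_mor_zero₂₃ _ mem
        simp only [Triangle.rotate, Triangle.mk_mor₁, Triangle.mk_mor₂, Triangle.mk_mor₃] at hz hv
        rw [hv, ← hw]
        exact (Category.assoc _ _ _).trans ((congrArg (fun x => w ≫ x) hz).trans comp_zero)
      have hg : g = 0 := H A hA g
      obtain ⟨s, hs⟩ := Triangle.coyoneda_exact₃ _ mem (𝟙 Y) (by rw [hg]; exact comp_zero)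
      exact ⟨n, s, p, hs.symm⟩
    · intro hY Z hZ u
      exact hZ Y hY u
  · intro Y
    constructor
    · intro hY Z hZ u
      exact hZ Y hY u
    · intro H
      obtain ⟨n, p, hp⟩ := exists_left_approx k T Y
      obtain ⟨W, g, hh, mem⟩ := distinguished_cocone_triangle p
      have hW : memPerpT T W := by
        apply memPerpT_of_forall
        intro u
        have hu : (Triangle.mk p g hh).mor₂ ≫ u = 0 :=
          fromBiprod_zero hT (g ≫ u)
        obtain ⟨v, hv⟩ := Triangle.yoneda_exact₃ _ mem u hu
        obtain ⟨v', hv'⟩ : ∃ v' : Y ⟶ T, (shiftFunctor C (1 : ℤ)).map v' = v :=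
          ⟨(shiftFunctor C (1 : ℤ)).preimage v, Functor.map_preimage _ v⟩
        obtain ⟨w, hw⟩ := hp v'
        have hz := comp_distTriang_mor_zero₃₁ _ mem
        simp only [Triangle.mk_mor₁, Triangle.mk_mor₂, Triangle.mk_mor₃] at hz hv
        rw [hv, ← hv', ← hw, Functor.map_comp]
        exact (Category.assoc _ _ _).symm.trans
          ((congrArg (fun x => x ≫ (shiftFunctor C (1 : ℤ)).map w) hz).trans zero_comp)
      have hhz : hh = 0 := H W hW hh
      have hmor : ((Triangle.mk p g hh).invRotate).mor₁ = 0 := by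
        dsimp [Triangle.invRotate]
        rw [hhz]
        exact neg_eq_zero.mpr ((congrArg (fun x => x ≫ (shiftEquiv C (1 : ℤ)).unitIso.inv.app Y)
          ((shiftFunctor C (-1)).map_zero W ((shiftFunctor C (1 : ℤ)).obj Y))).trans zero_comp)
      obtain ⟨r, hr⟩ := Triangle.yoneda_exact₂ _ (inv_rot_of_distTriang _ mem) (𝟙 Y)
        (by rw [hmor]; exact zero_comp)
      exact ⟨n, p, r, hr.symm⟩
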